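/- Let t₀ ∈ k^× and suppose α ∈ k satisfies α² = t₀. Then there is a k-algebra isomorphism A_{t₀} ≅ A, obtained by sending x ↦ α on the fixed point algebra A^θ ⊕ A^{-θ}x ⊆ A[x]/(x²−t₀). -/

import Mathlib

open LaurentPolynomial

/-- `A_t`: the `k[t^{±1}]`-subalgebra of `A[√t^{±1}]` generated by `A^θ` and
`(1/√t)·A^{-θ}`, i.e. `A^θ[t^{±1}] ⊕ (1/√t)A^{-θ} ⊗ k[t^{±1}]`. -/
noncomputable def contractionT (k A : Type*) [CommRing k] [CommRing A] [Algebra k A]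
    (θ : A →ₐ[k] A) : Subalgebra k (LaurentPolynomial A) :=
  Algebra.adjoin k (insert (T 2) (insert (T (-2))
    ({f | ∃ a, θ a = a ∧ f = C a} ∪ {f | ∃ a, θ a = -a ∧ f = C a * T (-1)})))

theorem tSubT0_mem_contractionT {k A : Type*} [CommRing k] [CommRing A] [Algebra k A]
    (θ : A →ₐ[k] A) (t₀ : k) :
    (T 2 - C (algebraMap k A t₀) : LaurentPolynomial A) ∈ contractionT k A θ :=
  sub_mem (Algebra.subset_adjoin (Set.mem_insert _ _))
    (show algebraMap k (LaurentPolynomial A) t₀ ∈ _ from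
      Subalgebra.algebraMap_mem _ t₀)

/-- The fiber `A_{t₀} = A_t/(t - t₀)` of the contraction algebra at a unit `t₀`. -/
noncomputable abbrev contractionFiber (k A : Type*) [CommRing k] [CommRing A] [Algebra k A]
    (θ : A →ₐ[k] A) (t₀ : k) :=
  ↥(contractionT k A θ) ⧸
    (Ideal.span {(⟨T 2 - C (algebraMap k A t₀), tSubT0_mem_contractionT θ t₀⟩ :
      ↥(contractionT k A θ))})

namespace ContractionSqrtAux

/-- Evaluation of a Laurent polynomial at a unit. -/
noncomputable def evalU {A : Type*} [CommRing A] (a : Aˣ) : LaurentPolynomial A →ₐ[A] A :=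
  AddMonoidAlgebra.lift A A ℤ ((Units.coeHom A).comp (zpowersHom Aˣ a))

lemma evalU_single {A : Type*} [CommRing A] (a : Aˣ) (n : ℤ) (r : A) :
    evalU a (AddMonoidAlgebra.single n r) = r * ↑(a ^ n) := by
  rw [evalU, AddMonoidAlgebra.lift_single, smul_eq_mul]
  rfl

lemma evalU_C {A : Type*} [CommRing A] (a : Aˣ) (b : A) : evalU a (C b) = b := by
  rw [← single_eq_C, evalU_single, zpow_zero, Units.val_one, mul_one]

lemma evalU_T {A : Type*} [CommRing A] (a : Aˣ) (n : ℤ) : evalU a (T n) = ↑(a ^ n) := by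
  rw [T, evalU_single, one_mul]

/-- `α` as a unit of `k`, given `α * α = u`. -/
noncomputable def sqrtUnit {k : Type*} [CommRing k] (u : kˣ) (α : k)
    (hα : α * α = (u : k)) : kˣ where
  val := α
  inv := (↑u⁻¹ : k) * α
  val_inv := by rw [mul_left_comm, hα, Units.inv_mul]
  inv_val := by rw [mul_assoc, hα, Units.inv_mul]

section Main

variable {k A : Type*} [CommRing k] [CommRing A] [Algebra k A] [Invertible (2 : k)]
  (θ : A →ₐ[k] A)

/-- The `θ`-fixed part of `a`. -/
noncomputable def pl (a : A) : A := (⅟(2:k)) • (a + θ a)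

/-- The `θ`-anti-fixed part of `a`. -/
noncomputable def mi (a : A) : A := (⅟(2:k)) • (a - θ a)

variable {θ}

lemma pl_add_mi (a : A) : pl θ a + mi θ a = a := by
  rw [pl, mi, ← smul_add]
  have : a + θ a + (a - θ a) = (2:k) • a := by rw [two_smul]; ring
  rw [this, smul_smul, invOf_mul_self, one_smul]

lemma theta_pl (hθ' : ∀ a, θ (θ a) = a) (a : A) : θ (pl θ a) = pl θ a := by
  rw [pl, map_smul, map_add, hθ', add_comm]

lemma theta_mi (hθ' : ∀ a, θ (θ a) = a) (a : A) : θ (mi θ a) = -(mi θ a) := by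
  rw [mi, map_smul, map_sub, hθ', ← smul_neg, neg_sub]

lemma pl_fixed {a : A} (h : θ a = a) : pl θ a = a := by
  rw [pl, h, ← two_smul k, smul_smul, invOf_mul_self, one_smul]

lemma mi_fixed {a : A} (h : θ a = a) : mi θ a = 0 := by
  rw [mi, h, sub_self, smul_zero]

lemma pl_neg {a : A} (h : θ a = -a) : pl θ a = 0 := by
  rw [pl, h, add_neg_cancel, smul_zero]

lemma mi_neg {a : A} (h : θ a = -a) : mi θ a = a := by
  rw [mi, h, sub_neg_eq_add, ← two_smul k, smul_smul, invOf_mul_self, one_smul]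

lemma pl_add (a b : A) : pl θ (a + b) = pl θ a + pl θ b := by
  rw [pl, pl, pl, map_add, ← smul_add]; ring_nf

lemma mi_add (a b : A) : mi θ (a + b) = mi θ a + mi θ b := by
  rw [mi, mi, mi, map_add, ← smul_add]; ring_nf

lemma half_mul_two : algebraMap k A (⅟(2:k)) * 2 = 1 := by
  rw [← map_ofNat (algebraMap k A) 2, ← map_mul, invOf_mul_self, map_one]

lemma pl_mul (a b : A) :
    pl θ (a * b) = pl θ a * pl θ b + mi θ a * mi θ b := by
  have h2 := half_mul_two (k := k) (A := A)
  simp only [pl, mi, Algebra.smul_def, map_mul]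
  linear_combination (-(algebraMap k A (⅟(2:k)) * (a * b + θ a * θ b))) * h2

lemma mi_mul (a b : A) :
    mi θ (a * b) = pl θ a * mi θ b + mi θ a * pl θ b := by
  have h2 := half_mul_two (k := k) (A := A)
  simp only [pl, mi, Algebra.smul_def, map_mul]
  linear_combination (-(algebraMap k A (⅟(2:k)) * (a * b - θ a * θ b))) * h2

variable (θ) in
/-- The canonical representative of `a : A` in the contraction algebra. -/
noncomputable def P (α : k) (a : A) : LaurentPolynomial A :=
  C (pl θ a) + α • (C (mi θ a) * T (-1))

lemma P_mem (hθ' : ∀ a, θ (θ a) = a) (α : k) (a : A) : P θ α a ∈ contractionT k A θ := by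
  refine add_mem (Algebra.subset_adjoin ?_)
    (Subalgebra.smul_mem _ (Algebra.subset_adjoin ?_) α)
  · exact Set.mem_insert_iff.mpr (Or.inr (Set.mem_insert_iff.mpr (Or.inr
      (Or.inl ⟨_, theta_pl hθ' a, rfl⟩))))
  · exact Set.mem_insert_iff.mpr (Or.inr (Set.mem_insert_iff.mpr (Or.inr
      (Or.inr ⟨_, theta_mi hθ' a, rfl⟩))))

lemma T_neg_one_mul : (T (-1) : LaurentPolynomial A) * T (-1) = T (-2) := by
  rw [← T_add]; norm_num

lemma T_neg_two_mul : (T (-2) : LaurentPolynomial A) * T 2 = 1 := by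
  have h : (-2 : ℤ) + 2 = 0 := by norm_num
  rw [← T_add, h, T_zero]

lemma P_mul_sub (hθ' : ∀ a, θ (θ a) = a) {u : kˣ} {α : k} (hα : α * α = (u : k)) (a b : A) :
    P θ α (a * b) - P θ α a * P θ α b
      = (C (mi θ a * mi θ b) * T (-2)) * (T 2 - C (algebraMap k A (u : k))) := by
  have hT1 := T_neg_one_mul (A := A)
  have hT2 := T_neg_two_mul (A := A)
  have hβ : (C (algebraMap k A α) : LaurentPolynomial A) * C (algebraMap k A α)
      = C (algebraMap k A (u : k)) := by
    rw [← map_mul, ← map_mul, hα]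
  simp only [P, pl_mul, mi_mul, map_add, map_mul, Algebra.smul_def,
    LaurentPolynomial.algebraMap_apply]
  linear_combination (-(C (mi θ a) * C (mi θ b))) * hT2
    + (-(C (mi θ a) * C (mi θ b) * C (algebraMap k A α) * C (algebraMap k A α))) * hT1
    + (-(C (mi θ a) * C (mi θ b) * (T (-2) : LaurentPolynomial A))) * hβ

lemma P_add (α : k) (a b : A) : P θ α (a + b) = P θ α a + P θ α b := by
  simp only [P, pl_add, mi_add, map_add, add_mul, smul_add]
  ring

end Main

end ContractionSqrtAux

set_option maxHeartbeats 1000000 in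
set_option synthInstance.maxHeartbeats 100000 in
open ContractionSqrtAux in
theorem contractionFiber_iso_of_sqrt
    (k A : Type*) [CommRing k] [CommRing A] [Algebra k A] [Invertible (2 : k)]
    (θ : A →ₐ[k] A) (hθ : θ.comp θ = AlgHom.id k A)
    (u : kˣ) (α : k) (hα : α * α = (u : k)) :
    ∃ e : contractionFiber k A θ (u : k) ≃ₐ[k] A,
      (∀ (g : ↥(contractionT k A θ)) (a : A),
        (g : LaurentPolynomial A) = C a → e (Ideal.Quotient.mk _ g) = a) ∧
      (∀ (g : ↥(contractionT k A θ)) (b : A),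
        (g : LaurentPolynomial A) = C b * T (-1) →
          e (Ideal.Quotient.mk _ g) = algebraMap k A ((↑u⁻¹ : k) * α) * b) := by
  have hθ' : ∀ a, θ (θ a) = a := fun a => DFunLike.congr_fun hθ a
  set w : k := (↑u⁻¹ : k) * α with hw
  have hαw : α * w = 1 := by rw [hw, mul_left_comm, hα, Units.inv_mul]
  set v : k := ((u⁻¹ : kˣ) : k) with hv
  have hvu : v * (u : k) = 1 := Units.inv_mul u
  set σ : kˣ := sqrtUnit u α hα with hσdef
  have hσ2 : σ * σ = u := Units.ext hα
  set αA : Aˣ := Units.map (algebraMap k A).toMonoidHom σ with hαAdef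
  set φ : LaurentPolynomial A →ₐ[k] A := (evalU αA).restrictScalars k with hφdef
  have hφC : ∀ a : A, φ (C a) = a := fun a => evalU_C αA a
  have hφT : ∀ n : ℤ, φ (T n) = algebraMap k A ((σ ^ n : kˣ) : k) := by
    intro n
    show evalU αA (T n) = _
    rw [evalU_T, hαAdef, ← map_zpow (Units.map (algebraMap k A).toMonoidHom) σ n]
    rfl
  have hφT2 : φ (T 2) = algebraMap k A (u : k) := by
    rw [hφT]; congr 2; rw [zpow_two, hσ2]
  have hφTn2 : φ (T (-2)) = algebraMap k A v := by
    rw [hφT]; congr 2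
    rw [show (-2 : ℤ) = -(2 : ℤ) from rfl, zpow_neg, zpow_two, hσ2]
  have hφTn1 : φ (T (-1)) = algebraMap k A w := by
    rw [hφT]; congr 2; rw [zpow_neg_one]; rfl
  -- membership helpers
  have memC : ∀ {a : A}, θ a = a → (C a : LaurentPolynomial A) ∈ contractionT k A θ :=
    fun {a} h => Algebra.subset_adjoin (Set.mem_insert_iff.mpr (Or.inr
      (Set.mem_insert_iff.mpr (Or.inr (Or.inl ⟨a, h, rfl⟩)))))
  have memTn2 : (T (-2) : LaurentPolynomial A) ∈ contractionT k A θ :=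
    Algebra.subset_adjoin (Set.mem_insert_iff.mpr (Or.inr (Set.mem_insert _ _)))
  set S := contractionT k A θ with hSdef
  set ψ : ↥S →ₐ[k] A := φ.comp S.val with hψdef
  have hψapp : ∀ g : ↥S, ψ g = φ (g : LaurentPolynomial A) := fun _ => rfl
  set g0 : ↥S := ⟨T 2 - C (algebraMap k A (u : k)), tSubT0_mem_contractionT θ (u : k)⟩
    with hg0def
  set I : Ideal ↥S := Ideal.span {g0} with hIdef
  have hkill : ∀ g ∈ I, ψ g = 0 := by
    intro g hg
    obtain ⟨c, rfl⟩ := Ideal.mem_span_singleton.mp hg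
    have h1 : ψ g0 = 0 := by
      rw [hψapp, hg0def, map_sub, hφT2, hφC, sub_self]
    rw [map_mul, h1, zero_mul]
  set e0 : ↥S ⧸ I →ₐ[k] A := Ideal.Quotient.liftₐ I ψ hkill with he0def
  have he0 : ∀ g : ↥S, e0 (Ideal.Quotient.mk I g) = ψ g := by
    intro g
    rw [he0def, Ideal.Quotient.liftₐ_apply]
    exact Ideal.Quotient.lift_mk I _ _
  have hmk_add : ∀ x y : ↥S, Ideal.Quotient.mk I (x + y)
      = Ideal.Quotient.mk I x + Ideal.Quotient.mk I y := fun x y => map_add _ x y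
  have hmk_mul : ∀ x y : ↥S, Ideal.Quotient.mk I (x * y)
      = Ideal.Quotient.mk I x * Ideal.Quotient.mk I y := fun x y => map_mul _ x y
  have hmkval : ∀ (x y : ↥S), (x : LaurentPolynomial A) = (y : LaurentPolynomial A) →
      Ideal.Quotient.mk I x = Ideal.Quotient.mk I y :=
    fun _ _ h => congrArg _ (Subtype.ext h)
  -- quotient equality helper
  have hsub : ∀ (x y c : ↥S), (x : LaurentPolynomial A) - (y : LaurentPolynomial A)
        = (c : LaurentPolynomial A) * (T 2 - C (algebraMap k A (u : k))) →
      Ideal.Quotient.mk I x = Ideal.Quotient.mk I y := by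
    intro x y c h
    exact Ideal.Quotient.eq.mpr (Ideal.mem_span_singleton.mpr
      ⟨c, Subtype.ext (h.trans (mul_comm _ _))⟩)
  have hPmem : ∀ a : A, P θ α a ∈ S := fun a => P_mem hθ' α a
  have hρadd : ∀ a b : A, Ideal.Quotient.mk I ⟨P θ α (a + b), hPmem _⟩
      = Ideal.Quotient.mk I ⟨P θ α a, hPmem a⟩ + Ideal.Quotient.mk I ⟨P θ α b, hPmem b⟩ := by
    intro a b
    rw [← hmk_add]
    exact hmkval _ _ (P_add α a b)
  have hρmul : ∀ a b : A, Ideal.Quotient.mk I ⟨P θ α (a * b), hPmem _⟩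
      = Ideal.Quotient.mk I ⟨P θ α a, hPmem a⟩ * Ideal.Quotient.mk I ⟨P θ α b, hPmem b⟩ := by
    intro a b
    have hfix : θ (mi θ a * mi θ b) = mi θ a * mi θ b := by
      rw [map_mul, theta_mi hθ', theta_mi hθ', neg_mul_neg]
    have hcm : (C (mi θ a * mi θ b) * T (-2) : LaurentPolynomial A) ∈ S :=
      mul_mem (memC hfix) memTn2
    rw [← hmk_mul]
    exact hsub _ _ ⟨_, hcm⟩ (P_mul_sub hθ' hα a b)
  have hPfix : ∀ (a : A), θ a = a → P θ α a = C a := by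
    intro a h
    rw [P, pl_fixed h, mi_fixed h, map_zero, zero_mul, smul_zero, add_zero]
  have hPneg : ∀ (b : A), θ b = -b → P θ α (w • b) = C b * T (-1) := by
    intro b h
    have hθwb : θ (w • b) = -(w • b) := by rw [map_smul, h, smul_neg]
    have h1 : (C (algebraMap k A α) : LaurentPolynomial A) * C (algebraMap k A w) = 1 := by
      rw [← map_mul, ← map_mul, hαw, map_one, map_one]
    rw [P, pl_neg hθwb, mi_neg hθwb, map_zero, zero_add, Algebra.smul_def,
      LaurentPolynomial.algebraMap_apply, Algebra.smul_def w b, map_mul]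
    linear_combination (C b * (T (-1) : LaurentPolynomial A)) * h1
  have hφP : ∀ a : A, φ (P θ α a) = a := by
    intro a
    have h1 : algebraMap k A α * algebraMap k A w = 1 := by
      rw [← map_mul, hαw, map_one]
    have h2 := pl_add_mi (θ := θ) a
    rw [P, map_add, map_smul, map_mul, hφC, hφC, hφTn1, Algebra.smul_def]
    linear_combination (mi θ a) * h1 + h2
  -- the key computation
  have key : ∀ (x : LaurentPolynomial A) (hx : x ∈ S),
      Ideal.Quotient.mk I ⟨P θ α (φ x), hPmem _⟩ = Ideal.Quotient.mk I ⟨x, hx⟩ := by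
    intro x hx
    induction hx using Algebra.adjoin_induction with
    | mem y hy =>
      simp only [Set.mem_insert_iff, Set.mem_union, Set.mem_setOf_eq] at hy
      obtain rfl | rfl | ⟨a, ha, rfl⟩ | ⟨a, ha, rfl⟩ := hy
      · -- T 2
        have h1 : θ (algebraMap k A (u : k)) = algebraMap k A (u : k) := θ.commutes _
        have h2 : Ideal.Quotient.mk I ⟨P θ α (φ (T 2)), hPmem _⟩
            = Ideal.Quotient.mk I ⟨C (algebraMap k A (u : k)), memC h1⟩ :=
          hmkval _ _ (by show P θ α (φ (T 2)) = C (algebraMap k A (u : k)); rw [hφT2]; exact hPfix _ h1)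
        rw [h2]
        refine (hsub _ _ 1 ?_).symm
        rw [OneMemClass.coe_one]
        exact (one_mul _).symm
      · -- T (-2)
        have h1 : θ (algebraMap k A v) = algebraMap k A v := θ.commutes _
        have h2 : Ideal.Quotient.mk I ⟨P θ α (φ (T (-2))), hPmem _⟩
            = Ideal.Quotient.mk I ⟨C (algebraMap k A v), memC h1⟩ :=
          hmkval _ _ (by show P θ α (φ (T (-2))) = C (algebraMap k A v); rw [hφTn2]; exact hPfix _ h1)
        have hmem : (C (algebraMap k A v) * T (-2) : LaurentPolynomial A) ∈ S :=
          mul_mem (memC h1) memTn2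
        rw [h2]
        refine hsub _ _ ⟨_, hmem⟩ ?_
        show (C (algebraMap k A v) : LaurentPolynomial A) - T (-2)
          = (C (algebraMap k A v) * T (-2)) * (T 2 - C (algebraMap k A (u : k)))
        have hT2 := T_neg_two_mul (A := A)
        have hvt : (C (algebraMap k A v) : LaurentPolynomial A)
            * C (algebraMap k A (u : k)) = 1 := by
          rw [← map_mul, ← map_mul, hvu, map_one, map_one]
        linear_combination (-(C (algebraMap k A v))) * hT2
          + ((T (-2) : LaurentPolynomial A)) * hvt
      · -- C a with θ a = a
        exact hmkval _ _ (by show P θ α (φ (C a)) = C a; rw [hφC]; exact hPfix a ha)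
      · -- C a * T (-1) with θ a = -a
        refine hmkval _ _ ?_
        show P θ α (φ (C a * T (-1))) = C a * T (-1)
        have h1 : φ (C a * T (-1)) = w • a := by
          rw [map_mul, hφC, hφTn1, Algebra.smul_def, mul_comm]
        rw [h1]
        exact hPneg a ha
    | algebraMap r =>
      refine hmkval _ _ ?_
      have h1 : θ (algebraMap k A r) = algebraMap k A r := θ.commutes r
      show P θ α (φ (algebraMap k (LaurentPolynomial A) r))
        = algebraMap k (LaurentPolynomial A) r
      rw [AlgHom.commutes, hPfix _ h1]
      exact (LaurentPolynomial.algebraMap_apply r).symm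
    | add x y hx hy ihx ihy =>
      have h1 : Ideal.Quotient.mk I ⟨P θ α (φ (x + y)), hPmem _⟩
          = Ideal.Quotient.mk I ⟨P θ α (φ x + φ y), hPmem _⟩ :=
        hmkval _ _ (by show P θ α (φ (x + y)) = P θ α (φ x + φ y); rw [map_add])
      rw [h1, hρadd, ihx, ihy, ← hmk_add]
      exact hmkval _ _ rfl
    | mul x y hx hy ihx ihy =>
      have h1 : Ideal.Quotient.mk I ⟨P θ α (φ (x * y)), hPmem _⟩
          = Ideal.Quotient.mk I ⟨P θ α (φ x * φ y), hPmem _⟩ :=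
        hmkval _ _ (by show P θ α (φ (x * y)) = P θ α (φ x * φ y); rw [map_mul])
      rw [h1, hρmul, ihx, ihy, ← hmk_mul]
      exact hmkval _ _ rfl
  -- bijectivity
  have hbij : Function.Bijective e0 := by
    constructor
    · intro q1 q2 hq
      obtain ⟨g1, rfl⟩ := Ideal.Quotient.mk_surjective q1
      obtain ⟨g2, rfl⟩ := Ideal.Quotient.mk_surjective q2
      rw [he0, he0, hψapp, hψapp] at hq
      calc Ideal.Quotient.mk I g1
          = Ideal.Quotient.mk I ⟨(g1 : LaurentPolynomial A), g1.2⟩ := by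
            rw [Subtype.coe_eta]
        _ = Ideal.Quotient.mk I ⟨P θ α (φ (g1 : LaurentPolynomial A)), hPmem _⟩ :=
            (key _ g1.2).symm
        _ = Ideal.Quotient.mk I ⟨P θ α (φ (g2 : LaurentPolynomial A)), hPmem _⟩ :=
            hmkval _ _ (by rw [show φ (g1 : LaurentPolynomial A) = φ (g2 : LaurentPolynomial A) from hq])
        _ = Ideal.Quotient.mk I ⟨(g2 : LaurentPolynomial A), g2.2⟩ := key _ g2.2
        _ = Ideal.Quotient.mk I g2 := by rw [Subtype.coe_eta]
    · intro a
      refine ⟨Ideal.Quotient.mk I ⟨P θ α a, hPmem a⟩, ?_⟩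
      rw [he0, hψapp]
      exact hφP a
  refine ⟨AlgEquiv.ofBijective e0 hbij, ?_, ?_⟩
  · intro g a hg
    show e0 (Ideal.Quotient.mk I g) = a
    rw [he0, hψapp, hg, hφC]
  · intro g b hg
    show e0 (Ideal.Quotient.mk I g) = algebraMap k A ((↑u⁻¹ : k) * α) * b
    rw [he0, hψapp, hg, map_mul, hφC, hφTn1, mul_comm]
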